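/- Suppose k! ≤ C L^k M_k for all k (with C, L > 0) and ν ≥ 1 is a fixed integer. Then exp(𝓜(r)) grows faster than any polynomial: for every N > 0, exp(𝓜(r)) / r^N → ∞ as r → ∞, where 𝓜(r) = sup_{k≥1} log(r^{νk}/M_{νk}). Equivalently, for every N > 0 there is R_N with exp(−𝓜(r)) ≤ r^{−N} for all r ≥ R_N. -/
import Mathlib


/-- `exp (𝓜 r)` grows faster than any polynomial. -/
theorem stmt_15 (M : ℕ → ℝ) (hpos : ∀ k, 0 < M k)
    (ν : ℕ) (hν : 1 ≤ ν)
    (C L : ℝ) (hC : 0 < C) (hL : 0 < L)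
    (hfact : ∀ k : ℕ, (k.factorial : ℝ) ≤ C * L ^ k * M k)
    (MM : ℝ → ℝ)
    (hMM : ∀ r : ℝ, 0 < r →
      MM r = sSup {x : ℝ | ∃ k : ℕ, 1 ≤ k ∧ x = Real.log (r ^ (ν * k) / M (ν * k))}) :
    (∀ N : ℝ, 0 < N →
      Filter.Tendsto (fun r : ℝ => Real.exp (MM r) / r ^ N)
        Filter.atTop Filter.atTop) ∧
    ∀ N : ℝ, 0 < N → ∃ R : ℝ, ∀ r : ℝ, R ≤ r →
      Real.exp (-(MM r)) ≤ r ^ (-N) := by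
  -- basic bound: r^n / M n ≤ C * exp (L * r) for r > 0
  have hbound : ∀ r : ℝ, 0 < r → ∀ n : ℕ, r ^ n / M n ≤ C * Real.exp (L * r) := by
    intro r hr n
    have hfac : (0 : ℝ) < (n.factorial : ℝ) := by positivity
    have h1 : r ^ n / M n ≤ C * ((L * r) ^ n / n.factorial) := by
      rw [div_le_iff₀ (hpos n),
        show C * ((L * r) ^ n / n.factorial) * M n = C * L ^ n * M n * r ^ n / n.factorial by
          rw [mul_pow]; ring, le_div_iff₀ hfac]
      nlinarith [hfact n, pow_nonneg hr.le n, pow_pos hr n]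
    have h2 : (L * r) ^ n / n.factorial ≤ Real.exp (L * r) :=
      Real.pow_div_factorial_le_exp (L * r) (by positivity) n
    calc r ^ n / M n ≤ C * ((L * r) ^ n / n.factorial) := h1
      _ ≤ C * Real.exp (L * r) := by nlinarith [Real.exp_pos (L * r)]
  -- key: r^(ν*k)/M(ν*k) ≤ exp (MM r) for r > 0, 1 ≤ k
  have hkey : ∀ r : ℝ, 0 < r → ∀ k : ℕ, 1 ≤ k →
      r ^ (ν * k) / M (ν * k) ≤ Real.exp (MM r) := by
    intro r hr k hk
    have hmem : Real.log (r ^ (ν * k) / M (ν * k)) ∈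
        {x : ℝ | ∃ k : ℕ, 1 ≤ k ∧ x = Real.log (r ^ (ν * k) / M (ν * k))} :=
      ⟨k, hk, rfl⟩
    have hbdd : BddAbove {x : ℝ | ∃ k : ℕ, 1 ≤ k ∧ x = Real.log (r ^ (ν * k) / M (ν * k))} := by
      refine ⟨Real.log (C * Real.exp (L * r)), ?_⟩
      rintro x ⟨j, hj, rfl⟩
      exact Real.log_le_log (div_pos (pow_pos hr _) (hpos _)) (hbound r hr (ν * j))
    have hle : Real.log (r ^ (ν * k) / M (ν * k)) ≤ MM r := by
      rw [hMM r hr]; exact le_csSup hbdd hmem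
    calc r ^ (ν * k) / M (ν * k)
        = Real.exp (Real.log (r ^ (ν * k) / M (ν * k))) := by
          rw [Real.exp_log (div_pos (pow_pos hr _) (hpos _))]
      _ ≤ Real.exp (MM r) := Real.exp_le_exp.mpr hle
  have main : ∀ N : ℝ, 0 < N →
      Filter.Tendsto (fun r : ℝ => Real.exp (MM r) / r ^ N)
        Filter.atTop Filter.atTop := by
    intro N hN
    set k : ℕ := ⌈N⌉₊ + 1 with hk
    have hk1 : 1 ≤ k := Nat.le_add_left 1 _
    have hNk : N < ((ν * k : ℕ) : ℝ) := by
      have h1 : N ≤ (⌈N⌉₊ : ℝ) := Nat.le_ceil N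
      have h2 : (k : ℝ) ≤ ((ν * k : ℕ) : ℝ) := by
        exact_mod_cast Nat.le_mul_of_pos_left k hν
      have h3 : (⌈N⌉₊ : ℝ) < (k : ℝ) := by
        rw [hk]; push_cast; linarith
      linarith
    have htend : Filter.Tendsto (fun r : ℝ => r ^ (((ν * k : ℕ) : ℝ) - N) / M (ν * k))
        Filter.atTop Filter.atTop := by
      exact Filter.Tendsto.atTop_div_const (hpos _) (tendsto_rpow_atTop (by linarith))
    refine Filter.tendsto_atTop_mono' _ ?_ htend
    filter_upwards [Filter.eventually_ge_atTop (1 : ℝ)] with r hr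
    have hr0 : 0 < r := lt_of_lt_of_le one_pos hr
    have h1 : r ^ (((ν * k : ℕ) : ℝ) - N) / M (ν * k)
        = (r ^ (ν * k) / M (ν * k)) / r ^ N := by
      rw [Real.rpow_sub hr0, Real.rpow_natCast]
      ring
    rw [h1]
    gcongr
    exact hkey r hr0 k hk1
  refine ⟨main, ?_⟩
  intro N hN
  have h := (main N hN).eventually_ge_atTop 1
  rw [Filter.eventually_atTop] at h
  obtain ⟨R₀, hR₀⟩ := h
  refine ⟨max R₀ 1, fun r hr => ?_⟩
  have hr1 : (1 : ℝ) ≤ r := le_trans (le_max_right _ _) hr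
  have hr0 : 0 < r := lt_of_lt_of_le one_pos hr1
  have hge : 1 ≤ Real.exp (MM r) / r ^ N := hR₀ r (le_trans (le_max_left _ _) hr)
  have hrN : (0 : ℝ) < r ^ N := Real.rpow_pos_of_pos hr0 N
  have hle : r ^ N ≤ Real.exp (MM r) := by
    rw [le_div_iff₀ hrN] at hge; linarith
  rw [Real.exp_neg, Real.rpow_neg hr0.le]
  exact inv_anti₀ hrN hle
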